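/- Let G = (V,E) be a finite undirected graph, let G' = (V',E') be the ESC reduction graph of G, and let U ⊆ V be a vertex cover of G. Define C = {(v',v'') : v ∈ U}. Then |C| = |U| and the directed graph (V', E' \ C) is singly-connected. -/

import Mathlib

/-- A simple (directed) path from `v` to `w` in the directed graph with edge relation `E`:
a nonempty list of pairwise distinct vertices starting at `v`, ending at `w`,
with consecutive vertices joined by edges. -/
def IsSimplePath {V : Type*} (E : V → V → Prop) (v w : V) (p : List V) : Prop :=
  p.Chain' E ∧ p.head? = some v ∧ p.getLast? = some w ∧ p.Nodup

/-- A directed graph is singly-connected if for every pair of vertices there is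
at most one simple path between them. -/
def SinglyConnected {V : Type*} (E : V → V → Prop) : Prop :=
  ∀ v w : V, ∀ p q : List V, IsSimplePath E v w p → IsSimplePath E v w q → p = q

/-- The vertex set of the ESC reduction graph of an undirected graph `G`: two vertices
`v'`, `v''` for every vertex `v` of `G` and two vertices `e'`, `e''` for every edge `e`
of `G`. -/
def ESCVert {V : Type*} (G : SimpleGraph V) : Type _ :=
  (V ⊕ V) ⊕ (G.edgeSet ⊕ G.edgeSet)

/-- The vertex `v'` of the ESC reduction graph. -/
def ESCVert.vA {V : Type*} (G : SimpleGraph V) (v : V) : ESCVert G :=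
  Sum.inl (Sum.inl v)

/-- The vertex `v''` of the ESC reduction graph. -/
def ESCVert.vB {V : Type*} (G : SimpleGraph V) (v : V) : ESCVert G :=
  Sum.inl (Sum.inr v)

/-- The vertex `e'` of the ESC reduction graph. -/
def ESCVert.eA {V : Type*} (G : SimpleGraph V) (e : G.edgeSet) : ESCVert G :=
  Sum.inr (Sum.inl e)

/-- The vertex `e''` of the ESC reduction graph. -/
def ESCVert.eB {V : Type*} (G : SimpleGraph V) (e : G.edgeSet) : ESCVert G :=
  Sum.inr (Sum.inr e)

/-- The edge set of the ESC reduction graph of `G`: an edge `(v', v'')` for every vertex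
`v` of `G`, and edges `(e', u')`, `(e', w')`, `(u'', e'')`, `(w'', e'')` for every
undirected edge `e = {u, w}` of `G` (i.e. edges `(e', v')` and `(v'', e'')` for every
endpoint `v` of `e`). -/
def ESCEdges {V : Type*} (G : SimpleGraph V) : Set (ESCVert G × ESCVert G) :=
  {p | (∃ v : V, p = (ESCVert.vA G v, ESCVert.vB G v)) ∨
       (∃ (e : G.edgeSet) (v : V), v ∈ (e : Sym2 V) ∧ p = (ESCVert.eA G e, ESCVert.vA G v)) ∨
       (∃ (e : G.edgeSet) (v : V), v ∈ (e : Sym2 V) ∧ p = (ESCVert.vB G v, ESCVert.eB G e))}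

/-- A vertex cover of the undirected graph `G`: a set of vertices meeting every edge. -/
def IsVertexCover {V : Type*} (G : SimpleGraph V) (U : Set V) : Prop :=
  ∀ e ∈ G.edgeSet, ∃ v ∈ U, v ∈ e

section ESCHelper

open ESCVert

variable {V : Type*} {G : SimpleGraph V} {U : Set V}

/-- The edge relation after removing the cover edges. -/
abbrev escRel (G : SimpleGraph V) (U : Set V) (a b : ESCVert G) : Prop :=
  (a, b) ∈ ESCEdges G \ {p | ∃ v ∈ U, p = (vA G v, vB G v)}

private def escRk : ESCVert G → ℕ
  | Sum.inr (Sum.inl _) => 0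
  | Sum.inl (Sum.inl _) => 1
  | Sum.inl (Sum.inr _) => 2
  | Sum.inr (Sum.inr _) => 3

private lemma escRk_le (z : ESCVert G) : escRk z ≤ 3 := by
  rcases z with (_ | _) | (_ | _) <;> simp [escRk]

private lemma vA_inj {v x : V} (h : vA G v = vA G x) : v = x := by
  injection h with h'; injection h'

private lemma vB_inj {v x : V} (h : vB G v = vB G x) : v = x := by
  injection h with h'; injection h'

private lemma eA_inj {e f : G.edgeSet} (h : eA G e = eA G f) : e = f := by
  injection h with h'; injection h'

private lemma eB_inj {e f : G.edgeSet} (h : eB G e = eB G f) : e = f := by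
  injection h with h'; injection h' 

private lemma edge_cases {a b : ESCVert G} (h : escRel G U a b) :
    (∃ v, v ∉ U ∧ a = vA G v ∧ b = vB G v) ∨
    (∃ (e : G.edgeSet) (u : V), u ∈ (e : Sym2 V) ∧ a = eA G e ∧ b = vA G u) ∨
    (∃ (e : G.edgeSet) (u : V), u ∈ (e : Sym2 V) ∧ a = vB G u ∧ b = eB G e) := by
  obtain ⟨hmem, hnot⟩ := h
  rcases hmem with ⟨v, hv⟩ | ⟨e, u, hu, huv⟩ | ⟨e, u, hu, huv⟩
  · rw [Prod.ext_iff] at hv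
    exact Or.inl ⟨v, fun hvU => hnot ⟨v, hvU, by rw [Prod.ext_iff]; exact hv⟩, hv.1, hv.2⟩
  · rw [Prod.ext_iff] at huv
    exact Or.inr (Or.inl ⟨e, u, hu, huv.1, huv.2⟩)
  · rw [Prod.ext_iff] at huv
    exact Or.inr (Or.inr ⟨e, u, hu, huv.1, huv.2⟩)

private lemma escRk_step {a b : ESCVert G} (h : escRel G U a b) : escRk b = escRk a + 1 := by
  rcases edge_cases h with ⟨v, _, rfl, rfl⟩ | ⟨e, u, _, rfl, rfl⟩ | ⟨e, u, _, rfl, rfl⟩ <;>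
    simp [escRk, vA, vB, eA, eB]

private lemma no_out_eB {e : G.edgeSet} {b : ESCVert G} (h : escRel G U (eB G e) b) : False := by
  rcases edge_cases h with ⟨v, _, h1, _⟩ | ⟨f, u, _, h1, _⟩ | ⟨f, u, _, h1, _⟩
  · cases h1
  · injection h1 with h'; cases h'
  · cases h1

private lemma out_vA {v : V} {b : ESCVert G} (h : escRel G U (vA G v) b) :
    v ∉ U ∧ b = vB G v := by
  rcases edge_cases h with ⟨x, hx, h1, h2⟩ | ⟨f, u, _, h1, _⟩ | ⟨f, u, _, h1, _⟩
  · obtain rfl := vA_inj h1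
    exact ⟨hx, h2⟩
  · cases h1
  · injection h1 with h'; cases h' 

private lemma out_eA {e : G.edgeSet} {b : ESCVert G} (h : escRel G U (eA G e) b) :
    ∃ u, u ∈ (e : Sym2 V) ∧ b = vA G u := by
  rcases edge_cases h with ⟨x, _, h1, _⟩ | ⟨f, u, hu, h1, h2⟩ | ⟨f, u, _, h1, _⟩
  · cases h1
  · obtain rfl := eA_inj h1
    exact ⟨u, hu, h2⟩
  · cases h1

private lemma out_vB {v : V} {b : ESCVert G} (h : escRel G U (vB G v) b) :
    ∃ e : G.edgeSet, v ∈ (e : Sym2 V) ∧ b = eB G e := by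
  rcases edge_cases h with ⟨x, _, h1, _⟩ | ⟨f, u, _, h1, _⟩ | ⟨f, u, hu, h1, h2⟩
  · injection h1 with h'; cases h'
  · cases h1
  · obtain rfl := vB_inj h1
    exact ⟨f, hu, h2⟩

private lemma cover_unique (hU : IsVertexCover G U) {e : G.edgeSet} {u u' : V}
    (hue : u ∈ (e : Sym2 V)) (hu : u ∉ U)
    (hue' : u' ∈ (e : Sym2 V)) (hu' : u' ∉ U) : u = u' := by
  by_contra hne
  have hef : (e : Sym2 V) = s(u, u') := (Sym2.mem_and_mem_iff hne).mp ⟨hue, hue'⟩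
  obtain ⟨c, hcU, hce⟩ := hU e e.2
  rw [hef] at hce
  rcases Sym2.mem_iff.mp hce with rfl | rfl
  · exact hu hcU
  · exact hu' hcU

private lemma mid3 {x y m m' : ESCVert G}
    (h1 : escRel G U x m) (h2 : escRel G U m y)
    (h3 : escRel G U x m') (h4 : escRel G U m' y) : m = m' := by
  rcases edge_cases h1 with ⟨v, _, rfl, rfl⟩ | ⟨e, u, hu, rfl, rfl⟩ | ⟨e, u, hu, rfl, rfl⟩
  · exact ((out_vA h3).2).symm
  · obtain ⟨u2, hu2, rfl⟩ := out_eA h3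
    have hy1 := (out_vA h2).2
    have hy2 := (out_vA h4).2
    rw [hy1] at hy2
    obtain rfl := vB_inj hy2
    rfl
  · exact absurd h2 (fun h => no_out_eB h)

private lemma mid4 (hU : IsVertexCover G U) {x y a b a' b' : ESCVert G}
    (h1 : escRel G U x a) (h2 : escRel G U a b) (h3 : escRel G U b y)
    (h4 : escRel G U x a') (h5 : escRel G U a' b') (h6 : escRel G U b' y) :
    a = a' ∧ b = b' := by
  rcases edge_cases h1 with ⟨v, _, rfl, rfl⟩ | ⟨e, u, hu, rfl, rfl⟩ | ⟨e, u, hu, rfl, rfl⟩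
  · obtain ⟨f, _, rfl⟩ := out_vB h2
    exact absurd h3 (fun h => no_out_eB h)
  · obtain ⟨hUu, rfl⟩ := out_vA h2
    obtain ⟨u2, hu2, rfl⟩ := out_eA h4
    obtain ⟨hUu2, rfl⟩ := out_vA h5
    have : u = u2 := cover_unique hU hu hUu hu2 hUu2
    subst this
    exact ⟨rfl, rfl⟩
  · exact absurd h2 (fun h => no_out_eB h)

private lemma chain_rank_last : ∀ (p : List (ESCVert G)) (v w : ESCVert G),
    p.Chain' (escRel G U) → p.head? = some v → p.getLast? = some w →
    escRk w + 1 = escRk v + p.length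
  | [], _, _, _, hh, _ => by simp at hh
  | [a], v, w, _, hh, hl => by
      simp at hh hl
      subst hh; subst hl; simp
  | a :: b :: t, v, w, hc, hh, hl => by
      simp only [List.Chain', List.isChain_cons_cons] at hc
      have ih := chain_rank_last (b :: t) b w hc.2 rfl (by simpa using hl)
      have hstep := escRk_step hc.1
      simp at hh
      subst hh
      simp [List.length_cons] at ih ⊢
      omega

private lemma path_unique (hU : IsVertexCover G U) {v w : ESCVert G} {p q : List (ESCVert G)}
    (hp : IsSimplePath (escRel G U) v w p) (hq : IsSimplePath (escRel G U) v w q) : p = q := by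
  obtain ⟨hpc, hph, hpl, -⟩ := hp
  obtain ⟨hqc, hqh, hql, -⟩ := hq
  have h1 := chain_rank_last p v w hpc hph hpl
  have h2 := chain_rank_last q v w hqc hqh hql
  have hw := escRk_le (G := G) w
  have hlen : p.length = q.length := by omega
  have hle : p.length ≤ 4 := by omega
  clear h1 h2 hw
  rcases p with _ | ⟨a, _ | ⟨b, _ | ⟨c, _ | ⟨d, _ | ⟨x, r⟩⟩⟩⟩⟩ <;>
    rcases q with _ | ⟨a', _ | ⟨b', _ | ⟨c', _ | ⟨d', _ | ⟨x', r'⟩⟩⟩⟩⟩ <;>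
      simp only [List.length_cons, List.length_nil] at hlen hle <;>
      first
        | omega
        | skip
  · rfl
  · -- [a] = [a']
    simp at hph hqh
    rw [hph, hqh]
  · -- [a,b] = [a',b']
    simp at hph hqh hpl hql
    rw [hph, hqh, hpl, hql]
  · -- [a,b,c] = [a',b',c']
    simp only [List.Chain', List.isChain_cons_cons, List.isChain_singleton, and_true] at hpc hqc
    simp at hph hqh hpl hql
    subst hph; subst hqh
    subst hpl; subst hql
    rw [mid3 hpc.1 hpc.2 hqc.1 hqc.2]
  · -- length 4
    simp only [List.Chain', List.isChain_cons_cons, List.isChain_singleton, and_true] at hpc hqc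
    simp at hph hqh hpl hql
    subst hph; subst hqh
    subst hpl; subst hql
    obtain ⟨e1, e2⟩ := mid4 hU hpc.1 hpc.2.1 hpc.2.2 hqc.1 hqc.2.1 hqc.2.2
    rw [e1, e2]

end ESCHelper

open ESCVert in
/-- if `U` is a vertex cover of a finite undirected graph `G` and
`C = {(v', v'') : v ∈ U}`, then `|C| = |U|` and removing the edges in `C` from the ESC
reduction graph of `G` leaves a singly-connected directed graph. -/
theorem esc_of_vertexCover {V : Type*} [Finite V] (G : SimpleGraph V) (U : Set V)
    (hU : IsVertexCover G U) :
    ({p : ESCVert G × ESCVert G | ∃ v ∈ U, p = (vA G v, vB G v)}.ncard = U.ncard) ∧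
    SinglyConnected (fun a b : ESCVert G =>
      (a, b) ∈ ESCEdges G \ {p | ∃ v ∈ U, p = (vA G v, vB G v)}) := by
  constructor
  · have hset : {p : ESCVert G × ESCVert G | ∃ v ∈ U, p = (vA G v, vB G v)}
        = (fun v => (vA G v, vB G v)) '' U := by
      ext p
      simp [Set.mem_image, eq_comm]
    rw [hset]
    exact Set.ncard_image_of_injective U (fun a b h => vA_inj (congrArg Prod.fst h))
  · intro v w p q hp hq
    exact path_unique hU hp hq
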